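/- Let u₁, u₂: [0,1] → ℝ be twice differentiable, strictly increasing, with -u₁''(a)/u₁'(a) ≤ -u₂''(a)/u₂'(a) for all a ∈ [0,1]. Then for every a ∈ [0,1], (u₁(a) - u₁(0))/u₁'(a) ≤ (u₂(a) - u₂(0))/u₂'(a). -/

import Mathlib

open Set

/-- If `u₂` is more risk averse than `u₁` (pointwise higher coefficient of absolute risk
aversion) on `[0,1]`, then `(u₁(a)-u₁(0))/u₁'(a) ≤ (u₂(a)-u₂(0))/u₂'(a)` on `[0,1]`. -/
theorem risk_aversion_normalized_gain
    (u₁ u₂ : ℝ → ℝ)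
    (hd₁ : ∀ a ∈ Icc (0 : ℝ) 1, DifferentiableAt ℝ u₁ a)
    (hd₂ : ∀ a ∈ Icc (0 : ℝ) 1, DifferentiableAt ℝ u₂ a)
    (hdd₁ : ∀ a ∈ Icc (0 : ℝ) 1, DifferentiableAt ℝ (deriv u₁) a)
    (hdd₂ : ∀ a ∈ Icc (0 : ℝ) 1, DifferentiableAt ℝ (deriv u₂) a)
    (hpos₁ : ∀ a ∈ Icc (0 : ℝ) 1, 0 < deriv u₁ a)
    (hpos₂ : ∀ a ∈ Icc (0 : ℝ) 1, 0 < deriv u₂ a)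
    (hara : ∀ a ∈ Icc (0 : ℝ) 1,
      -(deriv (deriv u₁) a) / deriv u₁ a ≤ -(deriv (deriv u₂) a) / deriv u₂ a) :
    ∀ a ∈ Icc (0 : ℝ) 1,
      (u₁ a - u₁ 0) / deriv u₁ a ≤ (u₂ a - u₂ 0) / deriv u₂ a := by
  intro a ha
  obtain ⟨ha0, ha1⟩ := ha
  set φ : ℝ → ℝ := fun t => Real.log (deriv u₂ t) - Real.log (deriv u₁ t) with hφ
  -- derivative of φ at points of Icc 0 1
  have hφderiv : ∀ t ∈ Icc (0:ℝ) 1,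
      HasDerivAt φ (deriv (deriv u₂) t / deriv u₂ t - deriv (deriv u₁) t / deriv u₁ t) t := by
    intro t ht
    have h2 : HasDerivAt (fun s => Real.log (deriv u₂ s))
        (deriv (deriv u₂) t / deriv u₂ t) t := by
      have := (Real.hasDerivAt_log (hpos₂ t ht).ne').comp t ((hdd₂ t ht).hasDerivAt)
      simpa [div_eq_inv_mul, Function.comp_def] using this
    have h1 : HasDerivAt (fun s => Real.log (deriv u₁ s))
        (deriv (deriv u₁) t / deriv u₁ t) t := by
      have := (Real.hasDerivAt_log (hpos₁ t ht).ne').comp t ((hdd₁ t ht).hasDerivAt)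
      simpa [div_eq_inv_mul, Function.comp_def] using this
    exact h2.sub h1
  have hφcont : ContinuousOn φ (Icc (0:ℝ) 1) := fun t ht =>
    ((hφderiv t ht).differentiableAt.continuousAt).continuousWithinAt
  have hanti : AntitoneOn φ (Icc (0:ℝ) 1) := by
    apply antitoneOn_of_deriv_nonpos (convex_Icc 0 1) hφcont
    · intro t ht
      rw [interior_Icc] at ht
      exact ((hφderiv t (Ioo_subset_Icc_self ht)).differentiableAt).differentiableWithinAt
    · intro t ht
      rw [interior_Icc] at ht
      have ht' : t ∈ Icc (0:ℝ) 1 := Ioo_subset_Icc_self ht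
      rw [(hφderiv t ht').deriv]
      have h := hara t ht'
      rw [neg_div, neg_div, neg_le_neg_iff] at h
      linarith
  -- pointwise comparison on [0, a]
  have hpt : ∀ t ∈ Icc (0:ℝ) a,
      deriv u₁ t * deriv u₂ a ≤ deriv u₂ t * deriv u₁ a := by
    intro t ht
    have ht' : t ∈ Icc (0:ℝ) 1 := ⟨ht.1, le_trans ht.2 ha1⟩
    have hφle : φ a ≤ φ t := hanti ht' ⟨ha0, ha1⟩ ht.2
    have h1t := hpos₁ t ht'
    have h2t := hpos₂ t ht'
    have h1a := hpos₁ a ⟨ha0, ha1⟩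
    have h2a := hpos₂ a ⟨ha0, ha1⟩
    have hlog : Real.log (deriv u₁ t * deriv u₂ a) ≤ Real.log (deriv u₂ t * deriv u₁ a) := by
      rw [Real.log_mul h1t.ne' h2a.ne', Real.log_mul h2t.ne' h1a.ne']
      simp only [hφ] at hφle
      linarith
    exact (Real.log_le_log_iff (by positivity) (by positivity)).mp hlog
  -- integrability and FTC
  have hint : ∀ (u : ℝ → ℝ), (∀ x ∈ Icc (0:ℝ) 1, DifferentiableAt ℝ (deriv u) x) →
      IntervalIntegrable (deriv u) MeasureTheory.volume 0 a := by
    intro u hu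
    apply ContinuousOn.intervalIntegrable
    intro x hx
    rw [uIcc_of_le ha0] at hx
    exact ((hu x ⟨hx.1, le_trans hx.2 ha1⟩).continuousAt).continuousWithinAt
  have hint₁ := hint u₁ hdd₁
  have hint₂ := hint u₂ hdd₂
  have hftc : ∀ (u : ℝ → ℝ), (∀ x ∈ Icc (0:ℝ) 1, DifferentiableAt ℝ u x) →
      IntervalIntegrable (deriv u) MeasureTheory.volume 0 a →
      u a - u 0 = ∫ t in (0:ℝ)..a, deriv u t := by
    intro u hu hi
    refine (intervalIntegral.integral_deriv_eq_sub (fun x hx => ?_) hi).symm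
    rw [uIcc_of_le ha0] at hx
    exact hu x ⟨hx.1, le_trans hx.2 ha1⟩
  have h1a := hpos₁ a ⟨ha0, ha1⟩
  have h2a := hpos₂ a ⟨ha0, ha1⟩
  rw [div_le_div_iff₀ h1a h2a, hftc u₁ hd₁ hint₁, hftc u₂ hd₂ hint₂,
    ← intervalIntegral.integral_mul_const, ← intervalIntegral.integral_mul_const]
  exact intervalIntegral.integral_mono_on ha0
    (hint₁.mul_const _) (hint₂.mul_const _) hpt
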